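/- arXiv:2311.10927 — 2 statements merged into one kernel-verified Lean document; each statement's English description precedes it below -/
import Mathlib

section
/- Suppose (a*, μ*, ν*, λ*) is a KKT point of the proportional fairness program at which strict complementary slackness holds, the weights satisfy w_i > 0 and the values satisfy v_{i,m} > 0 for all i,m, and the demands are non-zero (x_{i,m} > 0 for all i,m). If fewer than NM − N of the 2NM + M inequality constraints hold as equalities at a*, then the matrix 𝐌 is not invertible. -/
open Matrix BigOperators

/-- Index type for the `(3NM+M) × (3NM+M)` KKT differential matrix: three blocks of
size `N*M` (for `a`, `μ`, `ν`) and one block of size `M` (for `λ`). -/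
abbrev KKTIdx (N M : ℕ) := (Fin N × Fin M) ⊕ ((Fin N × Fin M) ⊕ ((Fin N × Fin M) ⊕ Fin M))

/-- The block matrix
`𝐌 = [[M1, M2, −M2, −M3], [diag μ*, diag a*, 0, 0], [diag ν*, 0, diag(a*−x), 0],
[diag(λ*)D, 0, 0, diag(Da*−b)]]`
where `M1` is block diagonal with `i`-th `M×M` block `(μ_i − ν_i − λ) v_iᵀ`,
`M2` is block diagonal with `i`-th block `(v_iᵀ a_i) I`, `M3` stacks the blocks
`(v_iᵀ a_i) I` vertically, and `D ∈ ℝ^{M×NM}` has `(Da)_m = ∑ i, a_{i,m}`. -/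
noncomputable def KKTMatrix {N M : ℕ} (v x a mu nu : Fin N → Fin M → ℝ)
    (lam b : Fin M → ℝ) : Matrix (KKTIdx N M) (KKTIdx N M) ℝ :=
  Matrix.of fun r c =>
    match r, c with
    | .inl (i, m), .inl (j, m') =>
        if i = j then (mu i m - nu i m - lam m) * v i m' else 0
    | .inl (i, m), .inr (.inl (j, m')) =>
        if i = j ∧ m = m' then ∑ m'', v i m'' * a i m'' else 0
    | .inl (i, m), .inr (.inr (.inl (j, m'))) =>
        if i = j ∧ m = m' then -(∑ m'', v i m'' * a i m'') else 0
    | .inl (i, m), .inr (.inr (.inr m')) =>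
        if m = m' then -(∑ m'', v i m'' * a i m'') else 0
    | .inr (.inl (i, m)), .inl (j, m') => if i = j ∧ m = m' then mu i m else 0
    | .inr (.inl (i, m)), .inr (.inl (j, m')) => if i = j ∧ m = m' then a i m else 0
    | .inr (.inl _), _ => 0
    | .inr (.inr (.inl (i, m))), .inl (j, m') => if i = j ∧ m = m' then nu i m else 0
    | .inr (.inr (.inl (i, m))), .inr (.inr (.inl (j, m'))) =>
        if i = j ∧ m = m' then a i m - x i m else 0
    | .inr (.inr (.inl _)), _ => 0
    | .inr (.inr (.inr m)), .inl (_, m') => if m = m' then lam m else 0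
    | .inr (.inr (.inr m)), .inr (.inr (.inr m')) =>
        if m = m' then (∑ i, a i m) - b m else 0
    | .inr (.inr (.inr _)), _ => 0

/-- Primal feasibility for the proportional fairness program:
`0 ≤ a ≤ x` and `∑ i, a_{i,m} ≤ b_m`. -/
def PrimalFeasible {N M : ℕ} (x a : Fin N → Fin M → ℝ) (b : Fin M → ℝ) : Prop :=
  (∀ i m, 0 ≤ a i m ∧ a i m ≤ x i m) ∧ ∀ m, ∑ i, a i m ≤ b m

/-- A KKT point of the proportional fairness program: primal feasibility, dual
nonnegativity, stationarity `(μ_i − ν_i − λ)(v_iᵀ a_i) + w_i v_i = 0`, and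
complementary slackness. -/
def IsKKTPoint {N M : ℕ} (w : Fin N → ℝ) (v x : Fin N → Fin M → ℝ) (b : Fin M → ℝ)
    (a mu nu : Fin N → Fin M → ℝ) (lam : Fin M → ℝ) : Prop :=
  PrimalFeasible x a b ∧
  (∀ i m, 0 ≤ mu i m) ∧ (∀ i m, 0 ≤ nu i m) ∧ (∀ m, 0 ≤ lam m) ∧
  (∀ i m, (mu i m - nu i m - lam m) * (∑ m', v i m' * a i m') + w i * v i m = 0) ∧
  (∀ i m, mu i m * a i m = 0) ∧
  (∀ i m, nu i m * (a i m - x i m) = 0) ∧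
  (∀ m, lam m * ((∑ i, a i m) - b m) = 0)

/-- Strict complementary slackness: for every inequality constraint, exactly one of
the multiplier and the constraint slack is zero. -/
def StrictComplementarity {N M : ℕ} (x a mu nu : Fin N → Fin M → ℝ)
    (lam b : Fin M → ℝ) : Prop :=
  (∀ i m, Xor' (mu i m = 0) (a i m = 0)) ∧
  (∀ i m, Xor' (nu i m = 0) (a i m = x i m)) ∧
  (∀ m, Xor' (lam m = 0) ((∑ i, a i m) = b m))

/-- The number of the `2NM + M` inequality constraints `0 ≤ a`, `a ≤ x`, `Da ≤ b`
that hold with equality at `a`. -/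
noncomputable def numTight {N M : ℕ} (x a : Fin N → Fin M → ℝ) (b : Fin M → ℝ) : ℕ :=
  (Finset.univ.filter (fun p : Fin N × Fin M => a p.1 p.2 = 0)).card +
  (Finset.univ.filter (fun p : Fin N × Fin M => a p.1 p.2 = x p.1 p.2)).card +
  (Finset.univ.filter (fun m : Fin M => (∑ i, a i m) = b m)).card

lemma aux_not_li {V : Type*} [AddCommGroup V] [Module ℝ V] {ι ι' : Type*} [Fintype ι]
    [Fintype ι'] (f : ι → V) (g : ι' → V)
    (hmem : ∀ i, f i ∈ Submodule.span ℝ (Set.range g))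
    (hcard : Fintype.card ι' < Fintype.card ι) : ¬ LinearIndependent ℝ f := by
  classical
  intro hli
  set W := Submodule.span ℝ (Set.range g) with hW
  haveI : FiniteDimensional ℝ W := FiniteDimensional.span_of_finite ℝ (Set.finite_range g)
  have hli' : LinearIndependent ℝ (fun i => (⟨f i, hmem i⟩ : W)) :=
    LinearIndependent.of_comp W.subtype hli
  have h1 : Fintype.card ι ≤ Module.finrank ℝ W := hli'.fintype_card_le_finrank
  have h2 : Module.finrank ℝ W ≤ Fintype.card ι' :=
    (finrank_span_le_card _).trans (by convert Fintype.card_range_le g; rfl; rw [Set.toFinset_card])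
  omega


/-- index type for spanning family -/
abbrev SpanIdx (N M : ℕ) (x a : Fin N → Fin M → ℝ) (b : Fin M → ℝ) :=
  ((Fin N × Fin M) ⊕ ((Fin N × Fin M) ⊕ Fin M)) ⊕
  (Fin N ⊕ (({p : Fin N × Fin M // a p.1 p.2 = 0}) ⊕
    (({p : Fin N × Fin M // a p.1 p.2 = x p.1 p.2}) ⊕ ({m : Fin M // (∑ i, a i m) = b m}))))

noncomputable def spanFam {N M : ℕ} (v x a mu nu : Fin N → Fin M → ℝ)
    (lam b : Fin M → ℝ) : SpanIdx N M x a b → (KKTIdx N M → ℝ)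
  | .inl (.inl p) => KKTMatrix v x a mu nu lam b (.inr (.inl p))
  | .inl (.inr (.inl p)) => KKTMatrix v x a mu nu lam b (.inr (.inr (.inl p)))
  | .inl (.inr (.inr m)) => KKTMatrix v x a mu nu lam b (.inr (.inr (.inr m)))
  | .inr (.inl i) => fun c =>
      match c with
      | .inl (j, m') => if i = j then v i m' else 0
      | _ => 0
  | .inr (.inr (.inl ⟨p, _⟩)) => Pi.single (Sum.inr (Sum.inl p)) 1
  | .inr (.inr (.inr (.inl ⟨p, _⟩))) => Pi.single (Sum.inr (Sum.inr (Sum.inl p))) 1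
  | .inr (.inr (.inr (.inr ⟨m, _⟩))) => Pi.single (Sum.inr (Sum.inr (Sum.inr m))) 1

variable {N M : ℕ} {v x a mu nu : Fin N → Fin M → ℝ} {lam b : Fin M → ℝ}

lemma single_mu_mem (hsc1 : ∀ i m, Xor' (mu i m = 0) (a i m = 0)) (p : Fin N × Fin M) :
    Pi.single (Sum.inr (Sum.inl p) : KKTIdx N M) (1:ℝ) ∈
      Submodule.span ℝ (Set.range (spanFam v x a mu nu lam b)) := by
  classical
  obtain ⟨pi, pm⟩ := p
  by_cases h : a pi pm = 0
  · exact Submodule.subset_span ⟨.inr (.inr (.inl ⟨(pi, pm), h⟩)), rfl⟩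
  · have h0 : mu pi pm = 0 := by
      rcases hsc1 pi pm with ⟨h1, _⟩ | ⟨h1, _⟩
      · exact h1
      · exact absurd h1 h
    have key : Pi.single (Sum.inr (Sum.inl (pi, pm)) : KKTIdx N M) (1:ℝ) =
        (a pi pm)⁻¹ • spanFam v x a mu nu lam b (.inl (.inl (pi, pm))) := by
      funext c
      rcases c with ⟨j, m'⟩ | (⟨j, m'⟩ | (⟨j, m'⟩ | m'))
      · simp [spanFam, KKTMatrix, h0]
      · by_cases hc : pi = j ∧ pm = m'
        · obtain ⟨rfl, rfl⟩ := hc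
          simp [spanFam, KKTMatrix, inv_mul_cancel₀ h]
        · simp only [spanFam, KKTMatrix, Matrix.of_apply, if_neg hc, Pi.smul_apply,
            smul_eq_mul, mul_zero, Pi.single_apply]
          rw [if_neg]
          simp only [Sum.inr.injEq, Sum.inl.injEq, Prod.mk.injEq]
          tauto
      · simp [spanFam, KKTMatrix, Pi.single_apply]
      · simp [spanFam, KKTMatrix, Pi.single_apply]
    rw [key]
    exact Submodule.smul_mem _ _ (Submodule.subset_span ⟨.inl (.inl (pi, pm)), rfl⟩)

lemma single_nu_mem (hsc2 : ∀ i m, Xor' (nu i m = 0) (a i m = x i m)) (p : Fin N × Fin M) :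
    Pi.single (Sum.inr (Sum.inr (Sum.inl p)) : KKTIdx N M) (1:ℝ) ∈
      Submodule.span ℝ (Set.range (spanFam v x a mu nu lam b)) := by
  classical
  obtain ⟨pi, pm⟩ := p
  by_cases h : a pi pm = x pi pm
  · exact Submodule.subset_span ⟨.inr (.inr (.inr (.inl ⟨(pi, pm), h⟩))), rfl⟩
  · have h0 : nu pi pm = 0 := by
      rcases hsc2 pi pm with ⟨h1, _⟩ | ⟨h1, _⟩
      · exact h1
      · exact absurd h1 h
    have hne : a pi pm - x pi pm ≠ 0 := sub_ne_zero_of_ne h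
    have key : Pi.single (Sum.inr (Sum.inr (Sum.inl (pi, pm))) : KKTIdx N M) (1:ℝ) =
        (a pi pm - x pi pm)⁻¹ • spanFam v x a mu nu lam b (.inl (.inr (.inl (pi, pm)))) := by
      funext c
      rcases c with ⟨j, m'⟩ | (⟨j, m'⟩ | (⟨j, m'⟩ | m'))
      · simp [spanFam, KKTMatrix, h0]
      · simp [spanFam, KKTMatrix, Pi.single_apply]
      · by_cases hc : pi = j ∧ pm = m'
        · obtain ⟨rfl, rfl⟩ := hc
          simp [spanFam, KKTMatrix, inv_mul_cancel₀ hne]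
        · simp only [spanFam, KKTMatrix, Matrix.of_apply, if_neg hc, Pi.smul_apply,
            smul_eq_mul, mul_zero, Pi.single_apply]
          rw [if_neg]
          simp only [Sum.inr.injEq, Sum.inl.injEq, Prod.mk.injEq]
          tauto
      · simp [spanFam, KKTMatrix, Pi.single_apply]
    rw [key]
    exact Submodule.smul_mem _ _ (Submodule.subset_span ⟨.inl (.inr (.inl (pi, pm))), rfl⟩)

lemma single_lam_mem (hsc3 : ∀ m, Xor' (lam m = 0) ((∑ i, a i m) = b m)) (m : Fin M) :
    Pi.single (Sum.inr (Sum.inr (Sum.inr m)) : KKTIdx N M) (1:ℝ) ∈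
      Submodule.span ℝ (Set.range (spanFam v x a mu nu lam b)) := by
  classical
  by_cases h : (∑ i, a i m) = b m
  · exact Submodule.subset_span ⟨.inr (.inr (.inr (.inr ⟨m, h⟩))), rfl⟩
  · have h0 : lam m = 0 := by
      rcases hsc3 m with ⟨h1, _⟩ | ⟨h1, _⟩
      · exact h1
      · exact absurd h1 h
    have hne : (∑ i, a i m) - b m ≠ 0 := sub_ne_zero_of_ne h
    have key : Pi.single (Sum.inr (Sum.inr (Sum.inr m)) : KKTIdx N M) (1:ℝ) =
        ((∑ i, a i m) - b m)⁻¹ • spanFam v x a mu nu lam b (.inl (.inr (.inr m))) := by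
      funext c
      rcases c with ⟨j, m'⟩ | (⟨j, m'⟩ | (⟨j, m'⟩ | m'))
      · simp [spanFam, KKTMatrix, h0]
      · simp [spanFam, KKTMatrix, Pi.single_apply]
      · simp [spanFam, KKTMatrix, Pi.single_apply]
      · by_cases hc : m = m'
        · subst hc
          simp [spanFam, KKTMatrix, inv_mul_cancel₀ hne]
        · simp only [spanFam, KKTMatrix, Matrix.of_apply, if_neg hc, Pi.smul_apply,
            smul_eq_mul, mul_zero, Pi.single_apply]
          rw [if_neg]
          simp only [Sum.inr.injEq]
          tauto
    rw [key]
    exact Submodule.smul_mem _ _ (Submodule.subset_span ⟨.inl (.inr (.inr m)), rfl⟩)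

lemma arow_eq {w : Fin N → ℝ} (i : Fin N) (m : Fin M)
    (hs : (∑ m'', v i m'' * a i m'') ≠ 0)
    (hstat : (mu i m - nu i m - lam m) * (∑ m', v i m' * a i m') + w i * v i m = 0) :
    KKTMatrix v x a mu nu lam b (.inl (i, m)) =
      (-(w i * v i m / (∑ m'', v i m'' * a i m''))) • spanFam v x a mu nu lam b (.inr (.inl i))
      + (∑ m'', v i m'' * a i m'') •
          (Pi.single (Sum.inr (Sum.inl (i, m))) (1:ℝ) : KKTIdx N M → ℝ)
      + (-(∑ m'', v i m'' * a i m'')) •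
          (Pi.single (Sum.inr (Sum.inr (Sum.inl (i, m)))) (1:ℝ) : KKTIdx N M → ℝ)
      + (-(∑ m'', v i m'' * a i m'')) •
          (Pi.single (Sum.inr (Sum.inr (Sum.inr m))) (1:ℝ) : KKTIdx N M → ℝ) := by
  classical
  have hc : mu i m - nu i m - lam m = -(w i * v i m) / (∑ m'', v i m'' * a i m'') := by
    field_simp
    linarith
  funext c
  rcases c with ⟨j, m'⟩ | (⟨j, m'⟩ | (⟨j, m'⟩ | m')) <;>
    simp only [spanFam, KKTMatrix, Matrix.of_apply, Pi.add_apply, Pi.smul_apply, smul_eq_mul,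
      Pi.single_apply, reduceCtorEq, if_false, mul_zero, add_zero, zero_add, hc,
      Sum.inr.injEq, Sum.inl.injEq, Prod.mk.injEq]
  · split_ifs <;> ring
  · split_ifs with h1 h2 h3
    · ring
    · exact absurd ⟨h1.1.symm, h1.2.symm⟩ h2
    · exact absurd ⟨h3.1.symm, h3.2.symm⟩ h1
    · ring
  · split_ifs with h1 h2 h3
    · ring
    · exact absurd ⟨h1.1.symm, h1.2.symm⟩ h2
    · exact absurd ⟨h3.1.symm, h3.2.symm⟩ h1
    · ring
  · split_ifs with h1 h2 h3
    · ring
    · exact absurd h1.symm h2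
    · exact absurd h3.symm h1
    · ring

/-- If `(a*, μ*, ν*, λ*)` is a KKT point of the proportional fairness
program at which strict complementary slackness holds, the weights are positive, the
values are positive, the demands are nonzero, and fewer than `NM − N` of the `2NM + M`
inequality constraints hold as equalities at `a*`, then the matrix `𝐌` is not
invertible. -/
theorem kktMatrix_not_invertible {N M : ℕ} (w : Fin N → ℝ) (v x : Fin N → Fin M → ℝ)
    (b : Fin M → ℝ) (a mu nu : Fin N → Fin M → ℝ) (lam : Fin M → ℝ)
    (hKKT : IsKKTPoint w v x b a mu nu lam)
    (hstrict : StrictComplementarity x a mu nu lam b)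
    (hw : ∀ i, 0 < w i) (hv : ∀ i m, 0 < v i m) (hx : ∀ i m, 0 < x i m)
    (htight : numTight x a b < N * M - N) :
    ¬ IsUnit (KKTMatrix v x a mu nu lam b).det := by
  classical
  obtain ⟨⟨hfeas1, hfeas2⟩, hmu0, hnu0, hlam0, hstat, hcsmu, hcsnu, hcslam⟩ := hKKT
  obtain ⟨hsc1, hsc2, hsc3⟩ := hstrict
  have hM0 : 0 < M := by
    rcases Nat.eq_zero_or_pos M with hM | hM
    · exfalso
      subst hM
      rw [Nat.mul_zero, Nat.zero_sub] at htight
      exact absurd htight (Nat.not_lt_zero _)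
    · exact hM
  have hs : ∀ i, (∑ m'', v i m'' * a i m'') ≠ 0 := by
    intro i h
    have h2 := hstat i ⟨0, hM0⟩
    rw [h, mul_zero, zero_add] at h2
    exact absurd h2 (ne_of_gt (mul_pos (hw i) (hv i ⟨0, hM0⟩)))
  have hmem : ∀ r : KKTIdx N M, KKTMatrix v x a mu nu lam b r ∈
      Submodule.span ℝ (Set.range (spanFam v x a mu nu lam b)) := by
    intro r
    rcases r with ⟨i, m⟩ | (p | (p | m))
    · rw [arow_eq i m (hs i) (hstat i m)]
      refine Submodule.add_mem _ (Submodule.add_mem _ (Submodule.add_mem _ ?_ ?_) ?_) ?_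
      · exact Submodule.smul_mem _ _ (Submodule.subset_span ⟨.inr (.inl i), rfl⟩)
      · exact Submodule.smul_mem _ _ (single_mu_mem hsc1 (i, m))
      · exact Submodule.smul_mem _ _ (single_nu_mem hsc2 (i, m))
      · exact Submodule.smul_mem _ _ (single_lam_mem hsc3 m)
    · exact Submodule.subset_span ⟨.inl (.inl p), rfl⟩
    · exact Submodule.subset_span ⟨.inl (.inr (.inl p)), rfl⟩
    · exact Submodule.subset_span ⟨.inl (.inr (.inr m)), rfl⟩
  have hcard : Fintype.card (SpanIdx N M x a b) < Fintype.card (KKTIdx N M) := by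
    have h := htight
    rw [numTight] at h
    simp only [SpanIdx, KKTIdx, Fintype.card_sum, Fintype.card_prod, Fintype.card_fin,
      Fintype.card_subtype]
    generalize hk : N * M = Knm at *
    omega
  have hnli := aux_not_li (fun r : KKTIdx N M => KKTMatrix v x a mu nu lam b r)
    (spanFam v x a mu nu lam b) hmem hcard
  rw [Fintype.not_linearIndependent_iff] at hnli
  obtain ⟨y, hy, r0, hr0⟩ := hnli
  have hdet : (KKTMatrix v x a mu nu lam b).det = 0 := by
    rw [← Matrix.exists_vecMul_eq_zero_iff]
    refine ⟨y, fun h => hr0 (congrFun h r0), ?_⟩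
    funext c
    have h3 := congrFun hy c
    simpa [Matrix.vecMul, dotProduct, Finset.sum_apply] using h3
  rw [hdet]
  simp
end

section
/- The componentwise softmax map is 1-Lipschitz from (ℝ^N, ℓ1) to (ℝ^N, ℓ1): for all u, u' ∈ ℝ^N, Σ_{i=1}^N |softmax_i(u) − softmax_i(u')| ≤ Σ_{i=1}^N |u_i − u'_i|. -/
open BigOperators

/-- The softmax map on `ℝ^N`: `softmax_i(u) = exp(u_i) / ∑ k, exp(u_k)`. -/
noncomputable def softmax {N : ℕ} (u : Fin N → ℝ) (i : Fin N) : ℝ :=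
  Real.exp (u i) / ∑ k, Real.exp (u k)

private lemma softmax_aux_deriv_nonneg (x : ℝ) : 0 ≤ (x - 1) * Real.exp x + 1 := by
  have h1 := Real.add_one_le_exp (-x)
  have h2 : Real.exp (-x) * Real.exp x = 1 := by rw [← Real.exp_add]; simp
  nlinarith [mul_le_mul_of_nonneg_right h1 (Real.exp_pos x).le, Real.exp_pos x]

private lemma softmax_aux_key (t : ℝ) (ht : 0 ≤ t) :
    Real.exp t - 1 ≤ t * (Real.exp t + 1) / 2 := by
  set f : ℝ → ℝ := fun s => s * (Real.exp s + 1) / 2 - (Real.exp s - 1) with hf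
  have hd : ∀ x : ℝ, HasDerivAt f (((x - 1) * Real.exp x + 1) / 2) x := by
    intro x
    have h1 : HasDerivAt (fun s : ℝ => s * (Real.exp s + 1))
        (1 * (Real.exp x + 1) + x * Real.exp x) x :=
      (hasDerivAt_id x).mul ((Real.hasDerivAt_exp x).add_const 1)
    have h2 := (h1.div_const 2).sub ((Real.hasDerivAt_exp x).sub_const 1)
    exact h2.congr_deriv (by ring)
  have hmono : Monotone f := by
    apply monotone_of_deriv_nonneg
    · exact fun x => (hd x).differentiableAt
    · intro x
      rw [(hd x).deriv]
      have := softmax_aux_deriv_nonneg x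
      linarith
  have h0 : f 0 = 0 := by simp [hf]
  have := hmono ht
  rw [h0] at this
  simp only [hf] at this
  linarith

/-- `|e^x - e^y| ≤ (e^x + e^y)/2 * |x - y|`. -/
private lemma softmax_abs_exp_sub_exp (x y : ℝ) :
    |Real.exp x - Real.exp y| ≤ (Real.exp x + Real.exp y) / 2 * |x - y| := by
  wlog hxy : y ≤ x generalizing x y
  · have := this y x (le_of_not_ge hxy)
    rw [abs_sub_comm (Real.exp y), abs_sub_comm y x] at this
    linarith [this]
  have ht : 0 ≤ x - y := by linarith
  have hkey := softmax_aux_key (x - y) ht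
  have hx : Real.exp x = Real.exp y * Real.exp (x - y) := by
    rw [← Real.exp_add]; ring_nf
  have h1 : Real.exp y ≤ Real.exp x := Real.exp_le_exp.2 hxy
  rw [abs_of_nonneg (by linarith), abs_of_nonneg ht]
  have hyp := (Real.exp_pos y).le
  nlinarith [mul_le_mul_of_nonneg_left hkey hyp]

/-- The componentwise softmax map is 1-Lipschitz from `(ℝ^N, ℓ1)` to
`(ℝ^N, ℓ1)`: `∑ i, |softmax_i(u) − softmax_i(u')| ≤ ∑ i, |u_i − u'_i|`. -/
theorem softmax_one_lipschitz_l1 {N : ℕ} (u u' : Fin N → ℝ) :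
    ∑ i, |softmax u i - softmax u' i| ≤ ∑ i, |u i - u' i| := by
  rcases isEmpty_or_nonempty (Fin N) with hN | hN
  · simp
  set a : Fin N → ℝ := fun i => Real.exp (u i) with ha
  set b : Fin N → ℝ := fun i => Real.exp (u' i) with hb
  set A : ℝ := ∑ k, a k with hA
  set B : ℝ := ∑ k, b k with hB
  set δ : Fin N → ℝ := fun i => |u i - u' i| with hδ
  have haP : ∀ i, 0 < a i := fun i => Real.exp_pos _
  have hbP : ∀ i, 0 < b i := fun i => Real.exp_pos _
  have hAP : 0 < A := Finset.sum_pos (fun i _ => haP i) Finset.univ_nonempty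
  have hBP : 0 < B := Finset.sum_pos (fun i _ => hbP i) Finset.univ_nonempty
  have hABP : 0 < A * B := mul_pos hAP hBP
  have haA : ∀ i, a i ≤ A := fun i =>
    Finset.single_le_sum (fun j _ => (haP j).le) (Finset.mem_univ i)
  have hbB : ∀ i, b i ≤ B := fun i =>
    Finset.single_le_sum (fun j _ => (hbP j).le) (Finset.mem_univ i)
  have hδ0 : ∀ i, 0 ≤ δ i := fun i => abs_nonneg _
  -- step 1: rewrite each summand
  have step1 : ∀ i, |softmax u i - softmax u' i|
      = |∑ k, (a i * b k - a k * b i)| / (A * B) := by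
    intro i
    have h1 : softmax u i - softmax u' i = (a i * B - b i * A) / (A * B) := by
      simp only [softmax, ← hA, ← hB, ← ha, ← hb]
      field_simp
      ring
    have h2 : a i * B - b i * A = ∑ k, (a i * b k - a k * b i) := by
      rw [Finset.sum_sub_distrib, ← Finset.mul_sum, ← Finset.sum_mul, hA, hB]
      ring
    rw [h1, ← h2, abs_div, abs_of_pos hABP]
  -- pointwise key bound
  have key : ∀ i k : Fin N, |a i * b k - a k * b i|
      ≤ (if i = k then 0 else (a i * b k + a k * b i) / 2 * (δ i + δ k)) := by
    intro i k
    by_cases h : i = k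
    · subst h; simp
    · rw [if_neg h]
      have h1 : a i * b k = Real.exp (u i + u' k) := (Real.exp_add _ _).symm
      have h2 : a k * b i = Real.exp (u k + u' i) := (Real.exp_add _ _).symm
      rw [h1, h2]
      calc |Real.exp (u i + u' k) - Real.exp (u k + u' i)|
          ≤ (Real.exp (u i + u' k) + Real.exp (u k + u' i)) / 2
              * |(u i + u' k) - (u k + u' i)| := softmax_abs_exp_sub_exp _ _
        _ ≤ (Real.exp (u i + u' k) + Real.exp (u k + u' i)) / 2 * (δ i + δ k) := by
            apply mul_le_mul_of_nonneg_left _ (by positivity)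
            have he : (u i + u' k) - (u k + u' i) = (u i - u' i) - (u k - u' k) := by ring
            rw [he]
            exact abs_sub _ _
  -- symmetrization
  have symm : ∑ i, ∑ k, (if i = k then (0:ℝ) else (a i * b k + a k * b i) / 2 * (δ i + δ k))
      = ∑ i, ∑ k, (if i = k then (0:ℝ) else a i * b k * (δ i + δ k)) := by
    have e1 : ∀ i k : Fin N, (if i = k then (0:ℝ) else (a i * b k + a k * b i) / 2 * (δ i + δ k))
        = ((if i = k then (0:ℝ) else a i * b k * (δ i + δ k))
          + (if i = k then (0:ℝ) else a k * b i * (δ i + δ k))) / 2 := by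
      intro i k
      by_cases h : i = k
      · simp [h]
      · rw [if_neg h, if_neg h, if_neg h]; ring
    have e2 : ∑ i, ∑ k, (if i = k then (0:ℝ) else a k * b i * (δ i + δ k))
        = ∑ i, ∑ k, (if i = k then (0:ℝ) else a i * b k * (δ i + δ k)) := by
      rw [Finset.sum_comm]
      apply Finset.sum_congr rfl
      intro i _
      apply Finset.sum_congr rfl
      intro k _
      by_cases h : i = k
      · simp [h]
      · rw [if_neg (fun hc => h hc.symm), if_neg h]; ring
    simp only [e1, ← Finset.sum_div]
    simp only [Finset.sum_add_distrib]
    rw [e2]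
    ring
  -- the final sum bound
  have hfinal : ∑ i, ∑ k, (if i = k then (0:ℝ) else a i * b k * (δ i + δ k))
      ≤ A * B * ∑ i, δ i := by
    have inner : ∀ i, ∑ k, (if i = k then (0:ℝ) else a i * b k * (δ i + δ k))
        = a i * B * δ i + a i * (∑ k, b k * δ k) - 2 * (a i * b i * δ i) := by
      intro i
      have : ∀ k, (if i = k then (0:ℝ) else a i * b k * (δ i + δ k))
          = a i * b k * (δ i + δ k) - (if i = k then a i * b k * (δ i + δ k) else 0) := by
        intro k; by_cases h : i = k <;> simp [h]
      simp only [this]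
      rw [Finset.sum_sub_distrib, Finset.sum_ite_eq]
      simp only [Finset.mem_univ, if_true]
      have : ∑ k, a i * b k * (δ i + δ k)
          = a i * B * δ i + a i * (∑ k, b k * δ k) := by
        rw [hB, Finset.mul_sum, Finset.sum_mul, Finset.mul_sum, ← Finset.sum_add_distrib]
        apply Finset.sum_congr rfl
        intro k _; ring
      rw [this]; ring
    simp only [inner]
    have hAC : ∑ i, a i * (∑ k, b k * δ k) = ∑ i, A * (b i * δ i) := by
      rw [← Finset.sum_mul, ← hA, Finset.mul_sum]
    rw [Finset.sum_sub_distrib, Finset.sum_add_distrib, hAC, ← Finset.sum_add_distrib,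
      ← Finset.sum_sub_distrib, Finset.mul_sum]
    apply Finset.sum_le_sum
    intro i _
    nlinarith [mul_nonneg (mul_nonneg (sub_nonneg.2 (haA i)) (sub_nonneg.2 (hbB i))) (hδ0 i),
      mul_nonneg (mul_nonneg (haP i).le (hbP i).le) (hδ0 i)]
  -- put everything together
  calc ∑ i, |softmax u i - softmax u' i|
      = ∑ i, |∑ k, (a i * b k - a k * b i)| / (A * B) := by
        exact Finset.sum_congr rfl fun i _ => step1 i
    _ ≤ ∑ i, (∑ k, |a i * b k - a k * b i|) / (A * B) := by
        apply Finset.sum_le_sum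
        intro i _
        gcongr
        exact Finset.abs_sum_le_sum_abs _ _
    _ ≤ ∑ i, (∑ k, (if i = k then (0:ℝ) else (a i * b k + a k * b i) / 2 * (δ i + δ k)))
          / (A * B) := by
        apply Finset.sum_le_sum
        intro i _
        gcongr with k hk
        exact key i k
    _ = (∑ i, ∑ k, (if i = k then (0:ℝ) else (a i * b k + a k * b i) / 2 * (δ i + δ k)))
          / (A * B) := (Finset.sum_div _ _ _).symm
    _ = (∑ i, ∑ k, (if i = k then (0:ℝ) else a i * b k * (δ i + δ k))) / (A * B) := by
        rw [symm]
    _ ≤ (A * B * ∑ i, δ i) / (A * B) := by gcongr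
    _ = ∑ i, δ i := by field_simp
end
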